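/- If G is a finite simple graph of order n ≥ 4 with girth g(G) ≥ 6 (where an acyclic graph is taken to have infinite girth, hence satisfies this condition) that has a perfect matching, then gp(μ(G)) = n. -/

import Mathlib

open SimpleGraph

variable {V : Type*}

/-- The Mycielskian of a graph `G`: vertices are `some (Sum.inl v)` (original vertices),
`some (Sum.inr v)` (twin vertices), and `none` (the root `u*`). -/
def Mycielskian (G : SimpleGraph V) : SimpleGraph (Option (V ⊕ V)) :=
  SimpleGraph.fromRel (fun x y =>
    (∃ u v, G.Adj u v ∧ x = some (Sum.inl u) ∧ y = some (Sum.inl v)) ∨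
    (∃ u v, G.Adj u v ∧ x = some (Sum.inl u) ∧ y = some (Sum.inr v)) ∨
    (∃ u, x = some (Sum.inr u) ∧ y = none))

/-- `S` is a general position set: no shortest path between two vertices of `S`
contains a third element of `S`. -/
def IsGPSet (G : SimpleGraph V) (S : Set V) : Prop :=
  ∀ u ∈ S, ∀ v ∈ S, ∀ p : G.Walk u v, p.length = G.dist u v →
    ∀ w ∈ S, w ∈ p.support → w = u ∨ w = v

/-- The general position number of `G`: the maximum cardinality of a general position set. -/
noncomputable def gpNumber (G : SimpleGraph V) [Fintype V] : ℕ :=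
  sSup {k | ∃ S : Set V, IsGPSet G S ∧ S.ncard = k}

/-- A gp-set: a general position set of maximum cardinality. -/
def IsGpSet (G : SimpleGraph V) [Fintype V] (S : Set V) : Prop :=
  IsGPSet G S ∧ S.ncard = gpNumber G

namespace Myc

def vl (u : V) : Option (V ⊕ V) := some (Sum.inl u)
def vr (u : V) : Option (V ⊕ V) := some (Sum.inr u)

@[simp] lemma vl_inj {u v : V} : vl u = vl v ↔ u = v := by simp [vl]
@[simp] lemma vr_inj {u v : V} : vr u = vr v ↔ u = v := by simp [vr]
@[simp] lemma vl_ne_vr {u v : V} : vl u ≠ vr v := by simp [vl, vr]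
@[simp] lemma vr_ne_vl {u v : V} : vr u ≠ vl v := by simp [vl, vr]
@[simp] lemma vl_ne_none {u : V} : vl u ≠ none := by simp [vl]
@[simp] lemma vr_ne_none {u : V} : vr u ≠ none := by simp [vr]
@[simp] lemma none_ne_vl {u : V} : none ≠ vl u := by simp [vl]
@[simp] lemma none_ne_vr {u : V} : none ≠ vr u := by simp [vr]

variable {G : SimpleGraph V}

@[simp] lemma adj_ll {u v : V} : (Mycielskian G).Adj (vl u) (vl v) ↔ G.Adj u v := by
  constructor
  · rintro ⟨hne, h | h⟩ <;>
      rcases h with ⟨a, b, hab, h1, h2⟩ | ⟨a, b, hab, h1, h2⟩ | ⟨a, h1, h2⟩ <;>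
      simp_all [vl] <;> exact hab.symm
  · intro h
    exact ⟨by simp [h.ne], Or.inl (Or.inl ⟨u, v, h, rfl, rfl⟩)⟩

@[simp] lemma adj_lr {u v : V} : (Mycielskian G).Adj (vl u) (vr v) ↔ G.Adj u v := by
  constructor
  · rintro ⟨hne, h | h⟩ <;>
      rcases h with ⟨a, b, hab, h1, h2⟩ | ⟨a, b, hab, h1, h2⟩ | ⟨a, h1, h2⟩ <;>
      simp_all [vl, vr]
  · intro h
    exact ⟨by simp, Or.inl (Or.inr (Or.inl ⟨u, v, h, rfl, rfl⟩))⟩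

@[simp] lemma adj_rl {u v : V} : (Mycielskian G).Adj (vr u) (vl v) ↔ G.Adj v u := by
  rw [SimpleGraph.adj_comm]; exact adj_lr

@[simp] lemma adj_rr {u v : V} : ¬ (Mycielskian G).Adj (vr u) (vr v) := by
  rintro ⟨hne, h | h⟩ <;>
    rcases h with ⟨a, b, hab, h1, h2⟩ | ⟨a, b, hab, h1, h2⟩ | ⟨a, h1, h2⟩ <;>
    simp_all [vr]

@[simp] lemma adj_rn {u : V} : (Mycielskian G).Adj (vr u) none :=
  ⟨by simp, Or.inl (Or.inr (Or.inr ⟨u, rfl, rfl⟩))⟩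

@[simp] lemma adj_nr {u : V} : (Mycielskian G).Adj none (vr u) := adj_rn.symm

@[simp] lemma adj_ln {u : V} : ¬ (Mycielskian G).Adj (vl u) none := by
  rintro ⟨hne, h | h⟩ <;>
    rcases h with ⟨a, b, hab, h1, h2⟩ | ⟨a, b, hab, h1, h2⟩ | ⟨a, h1, h2⟩ <;>
    simp_all [vl, vr]

@[simp] lemma adj_nl {u : V} : ¬ (Mycielskian G).Adj none (vl u) := fun h => adj_ln h.symm

end Myc

section Walks

variable {W : Type*} {H : SimpleGraph W}

lemma two_le_walk_length {x y : W} (p : H.Walk x y) (hne : x ≠ y) (hadj : ¬H.Adj x y) :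
    2 ≤ p.length := by
  cases p with
  | nil => exact absurd rfl hne
  | cons h q =>
    cases q with
    | nil => exact absurd h hadj
    | cons h' q' => simp [Nat.succ_le_succ, Nat.le_add_left]

lemma one_le_walk_length {x y : W} (p : H.Walk x y) (hne : x ≠ y) : 1 ≤ p.length := by
  cases p with
  | nil => exact absurd rfl hne
  | cons h q => simp

lemma three_le_walk_length {x y : W} (p : H.Walk x y) (hne : x ≠ y) (hadj : ¬H.Adj x y)
    (hc : ∀ c, ¬(H.Adj x c ∧ H.Adj c y)) : 3 ≤ p.length := by
  cases p with
  | nil => exact absurd rfl hne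
  | cons h q =>
    cases q with
    | nil => exact absurd h hadj
    | cons h' q' =>
      cases q' with
      | nil => exact absurd ⟨h, h'⟩ (hc _)
      | cons h'' q'' => simp [Nat.succ_le_succ, Nat.le_add_left]

lemma four_le_walk_length {x y : W} (p : H.Walk x y) (hne : x ≠ y) (hadj : ¬H.Adj x y)
    (hc : ∀ c, ¬(H.Adj x c ∧ H.Adj c y))
    (h3 : ∀ a b, ¬(H.Adj x a ∧ H.Adj a b ∧ H.Adj b y)) : 4 ≤ p.length := by
  cases p with
  | nil => exact absurd rfl hne
  | cons h q =>
    cases q with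
    | nil => exact absurd h hadj
    | cons h' q' =>
      cases q' with
      | nil => exact absurd ⟨h, h'⟩ (hc _)
      | cons h'' q'' =>
        cases q'' with
        | nil => exact absurd ⟨h, h', h''⟩ (h3 _ _)
        | cons h3' q3 => simp [Nat.succ_le_succ, Nat.le_add_left]

lemma dist_eq_of_walk {x y : W} {k : ℕ} (p : H.Walk x y) (hlen : p.length = k)
    (hall : ∀ q : H.Walk x y, k ≤ q.length) : H.dist x y = k := by
  refine le_antisymm (hlen ▸ SimpleGraph.dist_le p) ?_
  obtain ⟨q, hq⟩ := SimpleGraph.Reachable.exists_walk_length_eq_dist ⟨p⟩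
  exact hq ▸ hall q

lemma gp_violation {S : Set W} (hS : IsGPSet H S) {x y w : W} (hx : x ∈ S) (hy : y ∈ S)
    (hw : w ∈ S) (p : H.Walk x y) (hp : p.length = H.dist x y) (hmem : w ∈ p.support)
    (h1 : w ≠ x) (h2 : w ≠ y) : False := by
  rcases hS x hx y hy p hp w hw hmem with h | h
  · exact h1 h
  · exact h2 h

end Walks

namespace Myc

variable {G : SimpleGraph V}

noncomputable def pr [Nonempty V] : Option (V ⊕ V) → V :=
  fun x => x.elim (Classical.arbitrary V) (Sum.elim id id)

@[simp] lemma pr_vl [Nonempty V] (u : V) : pr (vl u) = u := rfl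
@[simp] lemma pr_vr [Nonempty V] (u : V) : pr (vr u) = u := rfl

lemma adj_pr [Nonempty V] {x y : Option (V ⊕ V)} (h : (Mycielskian G).Adj x y)
    (hx : x ≠ none) (hy : y ≠ none) : G.Adj (pr x) (pr y) := by
  match x, y with
  | none, _ => exact absurd rfl hx
  | _, none => exact absurd rfl hy
  | some (Sum.inl a), some (Sum.inl b) => exact adj_ll.mp h
  | some (Sum.inl a), some (Sum.inr b) => exact adj_lr.mp h
  | some (Sum.inr a), some (Sum.inl b) => exact (adj_rl.mp h).symm
  | some (Sum.inr a), some (Sum.inr b) => exact absurd h adj_rr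

lemma proj_walk [Nonempty V] {x y : Option (V ⊕ V)} (p : (Mycielskian G).Walk x y) :
    none ∉ p.support → ∃ q : G.Walk (pr x) (pr y), q.length = p.length := by
  induction p with
  | nil => exact fun _ => ⟨SimpleGraph.Walk.nil, rfl⟩
  | @cons a b c h p' ih =>
    intro hn
    rw [SimpleGraph.Walk.support_cons, List.mem_cons] at hn
    push_neg at hn
    obtain ⟨ha', hn'⟩ := hn
    have ha : a ≠ none := fun h => ha' h.symm
    have hb : b ≠ none := fun h => hn' (h ▸ SimpleGraph.Walk.start_mem_support p')
    obtain ⟨q, hq⟩ := ih hn'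
    exact ⟨SimpleGraph.Walk.cons (adj_pr h ha hb) q, by simp [hq]⟩

/-- any μ-walk from `vl u` to `none` has length ≥ 2 -/
lemma len_ln {u : V} (p : (Mycielskian G).Walk (vl u) none) : 2 ≤ p.length :=
  two_le_walk_length p (by simp) adj_ln

lemma len_rr {a b : V} (p : (Mycielskian G).Walk (vr a) (vr b)) (h : a ≠ b) : 2 ≤ p.length :=
  two_le_walk_length p (by simp [h]) adj_rr

lemma len_lr2 {u w : V} (p : (Mycielskian G).Walk (vl u) (vr w)) (h : ¬G.Adj u w) :
    2 ≤ p.length :=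
  two_le_walk_length p (by simp) (by simp [h])

lemma len_ll2 {u w : V} (p : (Mycielskian G).Walk (vl u) (vl w)) (hne : u ≠ w)
    (h : ¬G.Adj u w) : 2 ≤ p.length :=
  two_le_walk_length p (by simp [hne]) (by simp [h])

lemma len_lr3 {u w : V} (p : (Mycielskian G).Walk (vl u) (vr w)) (hne : u ≠ w)
    (h : ¬G.Adj u w) (hc : ∀ c, ¬(G.Adj u c ∧ G.Adj c w)) : 3 ≤ p.length := by
  have : Nonempty V := ⟨u⟩
  rcases Classical.em (none ∈ p.support) with hn | hn
  · obtain ⟨q, r, hqr⟩ := SimpleGraph.Walk.mem_support_iff_exists_append.mp hn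
    have : p.length = q.length + r.length := by rw [hqr]; simp
    have h1 := len_ln q
    have h2 := one_le_walk_length r (by simp)
    omega
  · obtain ⟨q, hq⟩ := proj_walk p hn
    simp only [pr_vl, pr_vr] at q hq
    have := three_le_walk_length q hne h hc
    omega

lemma len_ll4 {u w : V} (p : (Mycielskian G).Walk (vl u) (vl w)) (hne : u ≠ w)
    (h : ¬G.Adj u w) (hc : ∀ c, ¬(G.Adj u c ∧ G.Adj c w))
    (h3 : ∀ a b, ¬(G.Adj u a ∧ G.Adj a b ∧ G.Adj b w)) : 4 ≤ p.length := by
  have : Nonempty V := ⟨u⟩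
  rcases Classical.em (none ∈ p.support) with hn | hn
  · obtain ⟨q, r, hqr⟩ := SimpleGraph.Walk.mem_support_iff_exists_append.mp hn
    have : p.length = q.length + r.length := by rw [hqr]; simp
    have h1 := len_ln q
    have h2 := len_ln r.reverse
    rw [SimpleGraph.Walk.length_reverse] at h2
    omega
  · obtain ⟨q, hq⟩ := proj_walk p hn
    simp only [pr_vl, pr_vr] at q hq
    have := four_le_walk_length q hne h hc h3
    omega

end Myc

namespace Myc
variable {G : SimpleGraph V}

lemma no_triangle (hg : 6 ≤ G.egirth) {a b c : V} (h1 : G.Adj a b) (h2 : G.Adj b c)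
    (h3 : G.Adj c a) : False := by
  rw [SimpleGraph.le_egirth] at hg
  have hcyc : (SimpleGraph.Walk.cons h1 (SimpleGraph.Walk.cons h2
      (SimpleGraph.Walk.cons h3 SimpleGraph.Walk.nil))).IsCycle := by
    simp [SimpleGraph.Walk.isCycle_def, SimpleGraph.Walk.isTrail_def, Sym2.eq_iff,
      h1.ne, h2.ne, h3.ne, h1.ne', h2.ne', h3.ne']
  have h6 := hg a _ hcyc
  norm_num [SimpleGraph.Walk.length_cons] at h6

lemma no_C5 (hg : 6 ≤ G.egirth) {a b c d e : V} (h1 : G.Adj a b) (h2 : G.Adj b c)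
    (h3 : G.Adj c d) (h4 : G.Adj d e) (h5 : G.Adj e a)
    (hac : a ≠ c) (had : a ≠ d) (hbd : b ≠ d) (hbe : b ≠ e) (hce : c ≠ e) : False := by
  rw [SimpleGraph.le_egirth] at hg
  have hcyc : (SimpleGraph.Walk.cons h1 (SimpleGraph.Walk.cons h2 (SimpleGraph.Walk.cons h3
      (SimpleGraph.Walk.cons h4 (SimpleGraph.Walk.cons h5 SimpleGraph.Walk.nil))))).IsCycle := by
    simp [SimpleGraph.Walk.isCycle_def, SimpleGraph.Walk.isTrail_def, Sym2.eq_iff,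
      h1.ne, h2.ne, h3.ne, h4.ne, h5.ne, h1.ne', h2.ne', h3.ne', h4.ne', h5.ne',
      hac, had, hbd, hbe, hce, hac.symm, had.symm, hbd.symm, hbe.symm, hce.symm]
  have h6 := hg a _ hcyc
  norm_num [SimpleGraph.Walk.length_cons] at h6

end Myc

namespace Myc
variable {G : SimpleGraph V}

lemma exists_matching_fun {M : Set (Sym2 V)} (hMe : M ⊆ G.edgeSet)
    (hMdisj : ∀ e ∈ M, ∀ f ∈ M, e ≠ f → ∀ v : V, v ∈ e → v ∉ f)
    (hMcov : ∀ v : V, ∃ e ∈ M, v ∈ e) :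
    ∃ m : V → V, (∀ v, G.Adj v (m v)) ∧ (∀ v, m (m v) = v) := by
  have key : ∀ v : V, ∃ w, G.Adj v w ∧ s(v, w) ∈ M := by
    intro v
    obtain ⟨e, heM, hve⟩ := hMcov v
    obtain ⟨w, rfl⟩ := Sym2.mem_iff_exists.mp hve
    exact ⟨w, (G.mem_edgeSet).mp (hMe heM), heM⟩
  choose m hadj hmem using key
  refine ⟨m, hadj, fun v => ?_⟩
  have h1 : s(v, m v) ∈ M := hmem v
  have h2 : s(m v, m (m v)) ∈ M := hmem (m v)
  by_cases he : s(v, m v) = s(m v, m (m v))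
  · rw [Sym2.eq_iff] at he
    rcases he with ⟨hva, hmm⟩ | ⟨hv, _⟩
    · exact absurd (hva ▸ hadj v : G.Adj (m v) (m v)) (G.irrefl)
    · exact hv.symm
  · exact absurd (Sym2.mem_mk_left _ _) (hMdisj _ h1 _ h2 he (m v) (Sym2.mem_mk_right _ _))

end Myc

namespace Myc
variable {G : SimpleGraph V}

open SimpleGraph.Walk in
/-- u, u' ∈ S and a G-neighbor x of u with x ∈ S (as original) is impossible. -/
lemma viol1 {S : Set (Option (V ⊕ V))} (hS : IsGPSet (Mycielskian G) S) {u x : V}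
    (hu : vl u ∈ S) (hu' : vr u ∈ S) (hx : G.Adj u x) (hxA : vl x ∈ S) : False := by
  have hd : (Mycielskian G).dist (vl u) (vr u) = 2 :=
    dist_eq_of_walk (cons (adj_ll.mpr hx) (cons (adj_lr.mpr hx.symm) nil)) (by simp)
      (fun q => len_lr2 q (G.loopless.irrefl u))
  exact gp_violation hS hu hu' hxA (cons (adj_ll.mpr hx) (cons (adj_lr.mpr hx.symm) nil))
    (by simp [hd]) (by simp [support_cons]) (by simp [hx.ne']) (by simp)

open SimpleGraph.Walk in
/-- two twins in S and the root in S is impossible. -/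
lemma viol2 {S : Set (Option (V ⊕ V))} (hS : IsGPSet (Mycielskian G) S) {a b : V}
    (ha : vr a ∈ S) (hb : vr b ∈ S) (hab : a ≠ b) (hnone : none ∈ S) : False := by
  have hd : (Mycielskian G).dist (vr a) (vr b) = 2 :=
    dist_eq_of_walk (cons adj_rn (cons adj_nr nil)) (by simp) (fun q => len_rr q hab)
  exact gp_violation hS ha hb hnone (cons adj_rn (cons adj_nr nil))
    (by simp [hd]) (by simp [support_cons]) (by simp) (by simp)

open SimpleGraph.Walk in
/-- u ∈ S (original) with two distinct neighbors x y whose twins are in S: impossible. -/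
lemma viol3 {S : Set (Option (V ⊕ V))} (hS : IsGPSet (Mycielskian G) S) {u x y : V}
    (hu : vl u ∈ S) (hx : G.Adj u x) (hy : G.Adj u y) (hxy : x ≠ y)
    (hxB : vr x ∈ S) (hyB : vr y ∈ S) : False := by
  have hd : (Mycielskian G).dist (vr x) (vr y) = 2 :=
    dist_eq_of_walk (cons (adj_rl.mpr hx) (cons (adj_lr.mpr hy) nil)) (by simp)
      (fun q => len_rr q hxy)
  exact gp_violation hS hxB hyB hu (cons (adj_rl.mpr hx) (cons (adj_lr.mpr hy) nil))
    (by simp [hd]) (by simp [support_cons]) (by simp) (by simp)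

open SimpleGraph.Walk in
/-- u,v ∈ S (originals), nonadjacent, with a common neighbor c whose original or twin
is in S: impossible. -/
lemma viol4 {S : Set (Option (V ⊕ V))} (hS : IsGPSet (Mycielskian G) S) {u v c : V}
    (hu : vl u ∈ S) (hv : vl v ∈ S) (huv : u ≠ v) (hnadj : ¬G.Adj u v)
    (hc1 : G.Adj u c) (hc2 : G.Adj c v) (hcS : vl c ∈ S ∨ vr c ∈ S) : False := by
  rcases hcS with hcS | hcS
  · have hd : (Mycielskian G).dist (vl u) (vl v) = 2 :=
      dist_eq_of_walk (cons (adj_ll.mpr hc1) (cons (adj_ll.mpr hc2) nil)) (by simp)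
        (fun q => len_ll2 q huv hnadj)
    exact gp_violation hS hu hv hcS (cons (adj_ll.mpr hc1) (cons (adj_ll.mpr hc2) nil))
      (by simp [hd]) (by simp [support_cons]) (by simp [hc1.ne']) (by simp [hc2.ne])
  · have hd : (Mycielskian G).dist (vl u) (vl v) = 2 :=
      dist_eq_of_walk (cons (adj_lr.mpr hc1) (cons (adj_rl.mpr hc2.symm) nil)) (by simp)
        (fun q => len_ll2 q huv hnadj)
    exact gp_violation hS hu hv hcS (cons (adj_lr.mpr hc1) (cons (adj_rl.mpr hc2.symm) nil))
      (by simp [hd]) (by simp [support_cons]) (by simp) (by simp)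

open SimpleGraph.Walk in
/-- u ∈ S (original), w ∈ S (twin), nonadjacent, common neighbor c with vl c ∈ S:
impossible. -/
lemma viol5 {S : Set (Option (V ⊕ V))} (hS : IsGPSet (Mycielskian G) S) {u w c : V}
    (hu : vl u ∈ S) (hw : vr w ∈ S) (hnadj : ¬G.Adj u w)
    (hc1 : G.Adj u c) (hc2 : G.Adj c w) (hcA : vl c ∈ S) : False := by
  have hd : (Mycielskian G).dist (vl u) (vr w) = 2 :=
    dist_eq_of_walk (cons (adj_ll.mpr hc1) (cons (adj_lr.mpr hc2) nil)) (by simp)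
      (fun q => len_lr2 q hnadj)
  exact gp_violation hS hu hw hcA (cons (adj_ll.mpr hc1) (cons (adj_lr.mpr hc2) nil))
    (by simp [hd]) (by simp [support_cons]) (by simp [hc1.ne']) (by simp)

open SimpleGraph.Walk in
/-- u ∈ S (original), w ∈ S (twin) at distance ≥ 3, x a neighbor of u with twin in S:
impossible. -/
lemma viol6 {S : Set (Option (V ⊕ V))} (hS : IsGPSet (Mycielskian G) S) {u w x : V}
    (hu : vl u ∈ S) (hw : vr w ∈ S) (huw : u ≠ w) (hnadj : ¬G.Adj u w)
    (hnc : ∀ c, ¬(G.Adj u c ∧ G.Adj c w)) (hx : G.Adj u x) (hxB : vr x ∈ S)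
    (hxw : x ≠ w) : False := by
  have hd : (Mycielskian G).dist (vl u) (vr w) = 3 :=
    dist_eq_of_walk (cons (adj_lr.mpr hx) (cons adj_rn (cons adj_nr nil))) (by simp)
      (fun q => len_lr3 q huw hnadj hnc)
  exact gp_violation hS hu hw hxB (cons (adj_lr.mpr hx) (cons adj_rn (cons adj_nr nil)))
    (by simp [hd]) (by simp [support_cons]) (by simp) (by simp [hxw])

open SimpleGraph.Walk in
/-- same configuration but with the root in S: impossible. -/
lemma viol7 {S : Set (Option (V ⊕ V))} (hS : IsGPSet (Mycielskian G) S) {u w x : V}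
    (hu : vl u ∈ S) (hw : vr w ∈ S) (huw : u ≠ w) (hnadj : ¬G.Adj u w)
    (hnc : ∀ c, ¬(G.Adj u c ∧ G.Adj c w)) (hx : G.Adj u x)
    (hnone : none ∈ S) : False := by
  have hd : (Mycielskian G).dist (vl u) (vr w) = 3 :=
    dist_eq_of_walk (cons (adj_lr.mpr hx) (cons adj_rn (cons adj_nr nil))) (by simp)
      (fun q => len_lr3 q huw hnadj hnc)
  exact gp_violation hS hu hw hnone (cons (adj_lr.mpr hx) (cons adj_rn (cons adj_nr nil)))
    (by simp [hd]) (by simp [support_cons]) (by simp) (by simp)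

open SimpleGraph.Walk in
/-- u ∈ S (original), w ∈ S (twin) at distance ≥ 3, with a path u-c-t-w where
vl t ∈ S: impossible. -/
lemma viol8 {S : Set (Option (V ⊕ V))} (hS : IsGPSet (Mycielskian G) S) {u w c t : V}
    (hu : vl u ∈ S) (hw : vr w ∈ S) (huw : u ≠ w) (hnadj : ¬G.Adj u w)
    (hnc : ∀ c, ¬(G.Adj u c ∧ G.Adj c w)) (h1 : G.Adj u c) (h2 : G.Adj c t)
    (h3 : G.Adj t w) (htA : vl t ∈ S) (htu : t ≠ u) : False := by
  have hd : (Mycielskian G).dist (vl u) (vr w) = 3 :=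
    dist_eq_of_walk (cons (adj_ll.mpr h1) (cons (adj_ll.mpr h2) (cons (adj_lr.mpr h3) nil)))
      (by simp) (fun q => len_lr3 q huw hnadj hnc)
  exact gp_violation hS hu hw htA
    (cons (adj_ll.mpr h1) (cons (adj_ll.mpr h2) (cons (adj_lr.mpr h3) nil)))
    (by simp [hd]) (by simp [support_cons]) (by simp [htu]) (by simp)

open SimpleGraph.Walk in
/-- u,v ∈ S (originals) at distance ≥ 4, x neighbor of u with vr x ∈ S, y any neighbor
of v: impossible. -/
lemma viol9 {S : Set (Option (V ⊕ V))} (hS : IsGPSet (Mycielskian G) S) {u v x y : V}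
    (hu : vl u ∈ S) (hv : vl v ∈ S) (huv : u ≠ v) (hnadj : ¬G.Adj u v)
    (hnc : ∀ c, ¬(G.Adj u c ∧ G.Adj c v))
    (h3 : ∀ a b, ¬(G.Adj u a ∧ G.Adj a b ∧ G.Adj b v))
    (hx : G.Adj u x) (hy : G.Adj v y) (hxS : vr x ∈ S ∨ none ∈ S) : False := by
  have hd : (Mycielskian G).dist (vl u) (vl v) = 4 :=
    dist_eq_of_walk (cons (adj_lr.mpr hx) (cons adj_rn (cons adj_nr
      (cons (adj_rl.mpr hy) nil)))) (by simp) (fun q => len_ll4 q huv hnadj hnc h3)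
  rcases hxS with hxS | hxS
  · exact gp_violation hS hu hv hxS (cons (adj_lr.mpr hx) (cons adj_rn (cons adj_nr
      (cons (adj_rl.mpr hy) nil)))) (by simp [hd]) (by simp [support_cons]) (by simp) (by simp)
  · exact gp_violation hS hu hv hxS (cons (adj_lr.mpr hx) (cons adj_rn (cons adj_nr
      (cons (adj_rl.mpr hy) nil)))) (by simp [hd]) (by simp [support_cons]) (by simp) (by simp)

open SimpleGraph.Walk in
/-- u ∈ S (original), root ∈ S, x neighbor of u with twin in S: impossible. -/
lemma viol10 {S : Set (Option (V ⊕ V))} (hS : IsGPSet (Mycielskian G) S) {u x : V}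
    (hu : vl u ∈ S) (hnone : none ∈ S) (hx : G.Adj u x) (hxB : vr x ∈ S) : False := by
  have hd : (Mycielskian G).dist (vl u) (none : Option (V ⊕ V)) = 2 :=
    dist_eq_of_walk (cons (adj_lr.mpr hx) (cons adj_rn nil)) (by simp)
      (fun q => len_ln q)
  exact gp_violation hS hu hnone hxB (cons (adj_lr.mpr hx) (cons adj_rn nil))
    (by simp [hd]) (by simp [support_cons]) (by simp) (by simp)

end Myc

namespace Myc

lemma walk_confined {G : SimpleGraph V} {m : V → V} (hmi : ∀ v, m (m v) = v)
    (hdeg : ∀ z y : V, G.Adj z y → y = m z) {x y : V} (q : G.Walk x y) :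
    y = x ∨ y = m x := by
  induction q with
  | nil => exact Or.inl rfl
  | @cons a b c h q ih =>
    have hb : b = m a := hdeg a b h
    subst hb
    rcases ih with h1 | h1
    · exact Or.inr h1
    · exact Or.inl (h1.trans (hmi a))

lemma main_upper {G : SimpleGraph V} [Fintype V] (hn : 4 ≤ Fintype.card V)
    (hg : 6 ≤ G.egirth) {m : V → V} (hma : ∀ v, G.Adj v (m v)) (hmi : ∀ v, m (m v) = v)
    (S : Set (Option (V ⊕ V))) (hS : IsGPSet (Mycielskian G) S) :
    S.ncard ≤ Fintype.card V := by
  classical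
  have hNV : Nonempty V := by rw [← Fintype.card_pos_iff]; omega
  set A : Set V := {v | vl v ∈ S} with hA
  set B : Set V := {v | vr v ∈ S} with hB
  have hmemA : ∀ v : V, v ∈ A ↔ vl v ∈ S := fun v => Iff.rfl
  have hmemB : ∀ v : V, v ∈ B ↔ vr v ∈ S := fun v => Iff.rfl
  -- decomposition of the cardinality of S
  have hSeq : S = (vl '' A) ∪ (vr '' B) ∪ (S ∩ {none}) := by
    ext x
    constructor
    · intro hx
      match x with
      | none => exact Or.inr ⟨hx, rfl⟩
      | some (Sum.inl v) => exact Or.inl (Or.inl ⟨v, hx, rfl⟩)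
      | some (Sum.inr v) => exact Or.inl (Or.inr ⟨v, hx, rfl⟩)
    · rintro ((⟨v, hv, rfl⟩ | ⟨v, hv, rfl⟩) | ⟨hx, _⟩)
      · exact hv
      · exact hv
      · exact hx
  have hd2 : Disjoint (vl '' A) (vr '' B) := by
    rw [Set.disjoint_left]
    rintro _ ⟨v, _, rfl⟩ ⟨w, _, hw⟩
    exact vr_ne_vl hw
  have hd1 : Disjoint ((vl '' A) ∪ (vr '' B)) (S ∩ {none}) := by
    rw [Set.disjoint_left]
    rintro x hx ⟨_, hx2⟩
    rcases hx with ⟨v, _, rfl⟩ | ⟨v, _, rfl⟩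
    · exact vl_ne_none (Set.mem_singleton_iff.mp hx2)
    · exact vr_ne_none (Set.mem_singleton_iff.mp hx2)
  have hinjl : Function.Injective (vl : V → Option (V ⊕ V)) := fun a b h => vl_inj.mp h
  have hinjr : Function.Injective (vr : V → Option (V ⊕ V)) := fun a b h => vr_inj.mp h
  have hcardS : S.ncard = A.ncard + B.ncard + (S ∩ {none}).ncard := by
    conv_lhs => rw [hSeq]
    rw [ Set.ncard_union_eq hd1 (Set.toFinite _) (Set.toFinite _),
      Set.ncard_union_eq hd2 (Set.toFinite _) (Set.toFinite _),
      Set.ncard_image_of_injective _ hinjl, Set.ncard_image_of_injective _ hinjr]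
  have hABcard : (A ∪ B).ncard + (A ∩ B).ncard = A.ncard + B.ncard :=
    Set.ncard_union_add_ncard_inter A B
  have hcompl2 : (A ∪ B).ncard + ((A ∪ B)ᶜ).ncard = Fintype.card V := by
    rw [Set.ncard_add_ncard_compl, Nat.card_eq_fintype_card]
  rw [hcardS]
  by_cases hroot : (none : Option (V ⊕ V)) ∈ S
  case pos =>
    have hρ : (S ∩ {none}).ncard = 1 := by
      have : S ∩ {none} = {none} := by
        apply Set.eq_singleton_iff_unique_mem.mpr
        exact ⟨⟨hroot, rfl⟩, fun x hx => hx.2⟩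
      rw [this, Set.ncard_singleton]
    have hBsub : ∀ a ∈ B, ∀ b ∈ B, a = b := by
      intro a ha b hb
      by_contra hab
      exact viol2 hS ha hb hab hroot
    have hR2 : ∀ u ∈ A, ∀ x, G.Adj u x → x ∉ B := fun u hu x hx hxB =>
      viol10 hS hu hroot hx hxB
    rcases Set.eq_empty_or_nonempty B with hBe | ⟨w, hwB⟩
    · -- B is empty
      have hAne : A ≠ Set.univ := by
        intro hAuniv
        have hallS : ∀ v : V, vl v ∈ S := fun v => by
          have : v ∈ A := hAuniv ▸ Set.mem_univ v
          exact this
        have hdeg : ∀ z y : V, G.Adj z y → y = m z := by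
          intro z y hzy
          by_contra hne2
          have hnadj : ¬G.Adj y (m z) := fun h =>
            no_triangle hg h ((hma z).symm) hzy
          exact viol4 hS (hallS y) (hallS (m z)) hne2 hnadj hzy.symm (hma z)
            (Or.inl (hallS z))
        obtain ⟨x⟩ := hNV
        have h2 : ({x, m x} : Set V) ≠ Set.univ := by
          intro h
          have h22 : ({x, m x} : Set V).ncard ≤ 2 :=
            (Set.ncard_insert_le _ _).trans (by simp)
          rw [h, Set.ncard_univ, Nat.card_eq_fintype_card] at h22
          omega
        obtain ⟨y, hy⟩ := (Set.ne_univ_iff_exists_notMem _).mp h2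
        simp only [Set.mem_insert_iff, Set.mem_singleton_iff, not_or] at hy
        have hnadj : ¬G.Adj x y := fun h => hy.2 (hdeg x y h)
        have hnc : ∀ c, ¬(G.Adj x c ∧ G.Adj c y) := by
          rintro c ⟨h1, h2'⟩
          have hc : c = m x := hdeg x c h1
          subst hc
          have : y = m (m x) := hdeg (m x) y h2'
          rw [hmi] at this
          exact hy.1 this
        have h3 : ∀ a b, ¬(G.Adj x a ∧ G.Adj a b ∧ G.Adj b y) := by
          rintro a b ⟨h1, h2', h3'⟩
          have ha : a = m x := hdeg x a h1
          subst ha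
          have hb : b = m (m x) := hdeg (m x) b h2'
          rw [hmi] at hb
          subst hb
          exact hnadj h3'
        exact viol9 hS (hallS x) (hallS y) (fun h => hy.1 h.symm) hnadj hnc h3
          (hma x) (hma y) (Or.inr hroot)
      have hAlt : A.ncard < Fintype.card V := by
        have : A.ncard < (Set.univ : Set V).ncard :=
          Set.ncard_lt_ncard (Set.ssubset_univ_iff.mpr hAne) (Set.toFinite _)
        rwa [Set.ncard_univ, Nat.card_eq_fintype_card] at this
      have hB0 : B.ncard = 0 := by rw [hBe]; simp
      omega
    · -- B = {w}
      have hBcard : B.ncard ≤ 1 := by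
        have hsub : B ⊆ {w} := fun b hb => hBsub b hb w hwB
        exact (Set.ncard_le_ncard hsub (Set.toFinite _)).trans (by simp)
      have hkey : ∀ u ∈ A, m u ∉ A := by
        intro u huA hmuA
        by_cases huw : u = w
        · subst huw
          exact hR2 (m u) hmuA u ((hma u).symm) hwB
        · have hnadj : ¬G.Adj u w := fun h => hR2 u huA w h hwB
          have hmuw : m u ≠ w := fun h => hR2 u huA (m u) (hma u) (by rw [h]; exact hwB)
          have hnadj2 : ¬G.Adj (m u) w := fun h => hR2 (m u) hmuA w h hwB
          have hc : ∃ c, G.Adj u c ∧ G.Adj c w := by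
            by_contra hnc; push_neg at hnc
            exact viol7 hS huA hwB huw hnadj (fun c hh => hnc c hh.1 hh.2) (hma u) hroot
          have hc' : ∃ c, G.Adj (m u) c ∧ G.Adj c w := by
            by_contra hnc; push_neg at hnc
            exact viol7 hS hmuA hwB hmuw hnadj2 (fun c hh => hnc c hh.1 hh.2)
              (hma (m u)) hroot
          obtain ⟨c, hc1, hc2⟩ := hc
          obtain ⟨c', hc1', hc2'⟩ := hc'
          by_cases hcc : c = c'
          · have hcmu : G.Adj c (m u) := by rw [hcc]; exact hc1'.symm
            exact no_triangle hg hc1 hcmu ((hma u).symm)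
          · -- C5 : w c u (m u) c'
            refine no_C5 hg hc2.symm hc1.symm (hma u) hc1' hc2' ?_ ?_ ?_ ?_ ?_
            · exact fun h => huw h.symm
            · exact fun h => hmuw h.symm
            · exact fun h => hnadj2 (h ▸ hc2)
            · exact hcc
            · exact fun h => hnadj (h ▸ hc2')
      have hinj : A.ncard ≤ (Aᶜ : Set V).ncard :=
        Set.ncard_le_ncard_of_injOn m (fun u hu => hkey u hu)
          (fun a _ b _ h => by rw [← hmi a, h, hmi b]) (Set.toFinite _)
      have hcompl : A.ncard + (Aᶜ : Set V).ncard = Fintype.card V := by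
        rw [Set.ncard_add_ncard_compl, Nat.card_eq_fintype_card]
      omega
  case neg =>
    have hρ : (S ∩ {none}).ncard = 0 := by
      have : S ∩ {none} = ∅ := by
        ext x; simp only [Set.mem_inter_iff, Set.mem_singleton_iff, Set.mem_empty_iff_false,
          iff_false, not_and]
        rintro hx rfl; exact hroot hx
      rw [this]; simp
    rw [hρ]
    have hL3 : ∀ u, u ∈ A → u ∈ B → ∀ x, G.Adj u x → x ∉ A := fun u hua hub x hx hxA =>
      viol1 hS hua hub hx hxA
    have hfinal : (A ∩ B).ncard ≤ ((A ∪ B)ᶜ : Set V).ncard := by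
      by_cases hbad : ∃ u, u ∈ A ∧ u ∈ B ∧ m u ∈ B
      · obtain ⟨u₀, hu₀A, hu₀B, hv₀B⟩ := hbad
        have hv₀A : m u₀ ∉ A := hL3 u₀ hu₀A hu₀B (m u₀) (hma u₀)
        have hCsub : ∀ u₁, u₁ ∈ A → u₁ ∈ B → u₁ = u₀ := by
          intro u₁ h1A h1B
          by_contra hne
          have hne' : u₀ ≠ u₁ := fun h => hne h.symm
          have hnadj : ¬G.Adj u₀ u₁ := fun h => hL3 u₀ hu₀A hu₀B u₁ h h1A
          have hv₀u₁ : m u₀ ≠ u₁ := fun h => hv₀A (h ▸ h1A)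
          have hc : ∃ c, G.Adj u₀ c ∧ G.Adj c u₁ := by
            by_contra hnc; push_neg at hnc
            exact viol6 hS hu₀A h1B hne' hnadj (fun c hh => hnc c hh.1 hh.2)
              (hma u₀) hv₀B hv₀u₁
          obtain ⟨c, hc1, hc2⟩ := hc
          by_cases ha1 : G.Adj u₁ (m u₀)
          · exact viol4 hS hu₀A h1A hne' hnadj (hma u₀) ha1.symm (Or.inr hv₀B)
          · by_cases hc2' : ∃ c2, G.Adj u₁ c2 ∧ G.Adj c2 (m u₀)
            · obtain ⟨c2, hd1, hd2⟩ := hc2'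
              by_cases hcc : c = c2
              · exact no_triangle hg hc1 (hcc ▸ hd2) ((hma u₀).symm)
              · -- C5 : u₀ c u₁ c2 (m u₀)
                refine no_C5 hg hc1 hc2 hd1 hd2 ((hma u₀).symm) hne' ?_ hcc ?_ ?_
                · exact fun h => hnadj (h ▸ hd1).symm
                · exact fun h => ha1 (h ▸ hc2).symm
                · exact fun h => hv₀A ((h ▸ h1A : (m u₀) ∈ A))
            · push_neg at hc2'
              exact viol8 hS h1A hv₀B (fun h => hv₀u₁ h.symm) ha1
                (fun c hh => hc2' c hh.1 hh.2) hc2.symm hc1.symm (hma u₀) hu₀A hne'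
        have hDne : ((A ∪ B)ᶜ : Set V).Nonempty := by
          by_contra hD
          rw [Set.not_nonempty_iff_eq_empty] at hD
          have huniv : ∀ v : V, v ∈ A ∨ v ∈ B := by
            intro v
            by_contra hv
            push_neg at hv
            have : v ∈ ((A ∪ B)ᶜ : Set V) := by
              simp only [Set.mem_compl_iff, Set.mem_union, not_or]
              exact hv
            rw [hD] at this
            exact this
          have hNu₀ : ∀ z, G.Adj u₀ z → z = m u₀ := by
            intro z hz
            by_contra hzv
            have hzA : z ∉ A := hL3 u₀ hu₀A hu₀B z hz
            have hzB : z ∈ B := (huniv z).resolve_left hzA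
            exact viol3 hS hu₀A hz (hma u₀) hzv hzB hv₀B
          have hw : ∃ w, G.Adj (m u₀) w ∧ w ≠ u₀ := by
            have h2 : ({u₀, m u₀} : Set V) ≠ Set.univ := by
              intro h
              have h22 : ({u₀, m u₀} : Set V).ncard ≤ 2 :=
                (Set.ncard_insert_le _ _).trans (by simp)
              rw [h, Set.ncard_univ, Nat.card_eq_fintype_card] at h22
              omega
            obtain ⟨y, hy⟩ := (Set.ne_univ_iff_exists_notMem _).mp h2
            simp only [Set.mem_insert_iff, Set.mem_singleton_iff, not_or] at hy
            have hynadj : ¬G.Adj u₀ y := fun h => hy.2 (hNu₀ y h)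
            by_cases hyB : y ∈ B
            · by_cases hyv : G.Adj (m u₀) y
              · exact ⟨y, hyv, hy.1⟩
              · exfalso
                refine viol6 hS hu₀A hyB (fun h => hy.1 h.symm) hynadj ?_
                  (hma u₀) hv₀B (fun h => hy.2 h.symm)
                rintro c ⟨hca, hcb⟩
                exact hyv ((hNu₀ c hca) ▸ hcb)
            · have hyA : y ∈ A := (huniv y).resolve_right hyB
              by_cases h2c : ∃ c, G.Adj u₀ c ∧ G.Adj c y
              · obtain ⟨c, hca, hcb⟩ := h2c
                exact ⟨y, (hNu₀ c hca) ▸ hcb, hy.1⟩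
              · by_cases h3c : ∃ a b, G.Adj u₀ a ∧ G.Adj a b ∧ G.Adj b y
                · obtain ⟨a, b, haa, hab, hby⟩ := h3c
                  have ha : a = m u₀ := hNu₀ a haa
                  by_cases hbu : b = u₀
                  · exact absurd (hbu ▸ hby) hynadj
                  · exact ⟨b, ha ▸ hab, hbu⟩
                · push_neg at h2c h3c
                  exact absurd (viol9 hS hu₀A hyA (fun h => hy.1 h.symm) hynadj
                    (fun c hh => h2c c hh.1 hh.2) (fun a b hh => h3c a b hh.1 hh.2.1 hh.2.2)
                    (hma u₀) (hma y) (Or.inl hv₀B)) (by simp)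
          obtain ⟨w, hwv, hwu⟩ := hw
          have hwnv : w ≠ m u₀ := hwv.ne'
          have hwA : w ∉ A := by
            intro hwA
            have hnadj : ¬G.Adj u₀ w := fun h => hwnv (hNu₀ w h)
            exact viol4 hS hu₀A hwA (fun h => hwu h.symm) hnadj (hma u₀) hwv
              (Or.inr hv₀B)
          have hwB : w ∈ B := (huniv w).resolve_left hwA
          have ht_u₀ : m w ≠ u₀ := by
            intro h
            have : w = m u₀ := by rw [← hmi w, h]
            exact hwnv this
          have ht_v₀ : m w ≠ m u₀ := by
            intro h
            have : w = u₀ := by rw [← hmi w, h, hmi]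
            exact hwu this
          have ht_nadj_v : ¬G.Adj (m u₀) (m w) := fun h =>
            no_triangle hg hwv (hma w) h.symm
          have ht_nadj_u : ¬G.Adj u₀ (m w) := fun h => ht_v₀ (hNu₀ (m w) h)
          have ht_nc : ∀ c, ¬(G.Adj u₀ c ∧ G.Adj c (m w)) := by
            rintro c ⟨h1, h2'⟩
            exact ht_nadj_v ((hNu₀ c h1) ▸ h2')
          rcases huniv (m w) with htA | htB
          · exact viol6 hS htA hu₀B ht_u₀ (fun h => ht_nadj_u h.symm)
              (fun c hh => ht_nc c ⟨hh.2.symm, hh.1.symm⟩) ((hma w).symm) hwB hwu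
          · exact viol6 hS hu₀A htB (fun h => ht_u₀ h.symm) ht_nadj_u
              (fun c hh => ht_nc c hh) (hma u₀) hv₀B ht_v₀.symm
        have hABsub : (A ∩ B).ncard ≤ 1 := by
          have hsub : A ∩ B ⊆ {u₀} := fun x hx => hCsub x hx.1 hx.2
          exact (Set.ncard_le_ncard hsub (Set.toFinite _)).trans (by simp)
        have h1D : 1 ≤ ((A ∪ B)ᶜ : Set V).ncard :=
          (Set.ncard_pos (Set.toFinite _)).mpr hDne
        omega
      · push_neg at hbad
        exact Set.ncard_le_ncard_of_injOn m
          (fun u hu => by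
            simp only [Set.mem_compl_iff, Set.mem_union, not_or]
            exact ⟨hL3 u hu.1 hu.2 (m u) (hma u), hbad u hu.1 hu.2⟩)
          (fun a _ b _ h => by rw [← hmi a, h, hmi b]) (Set.toFinite _)
    omega

end Myc

namespace Myc

open SimpleGraph.Walk in
lemma twins_gp {G : SimpleGraph V} : IsGPSet (Mycielskian G) (Set.range vr) := by
  rintro u ⟨a, rfl⟩ v ⟨b, rfl⟩ p hp w ⟨c, rfl⟩ hwsup
  by_cases hab : a = b
  · subst hab
    have hnil : p = SimpleGraph.Walk.nil := by
      cases p with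
      | nil => rfl
      | cons h q => simp [SimpleGraph.dist_self] at hp
    rw [hnil] at hwsup
    simp only [SimpleGraph.Walk.support_nil, List.mem_singleton] at hwsup
    exact Or.inl hwsup
  · have hd : (Mycielskian G).dist (vr a) (vr b) = 2 :=
      dist_eq_of_walk (cons adj_rn (cons adj_nr nil)) (by simp) (fun q => len_rr q hab)
    rw [hd] at hp
    cases p with
    | nil => simp at hp
    | cons h q =>
      cases q with
      | nil => simp at hp
      | @cons y z _ h' q' =>
        cases q' with
        | nil =>
          simp only [SimpleGraph.Walk.support_cons, SimpleGraph.Walk.support_nil,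
            List.mem_cons, List.mem_singleton] at hwsup
          rcases hwsup with h1 | h1 | h1 | h1
          · exact Or.inl h1
          · exfalso; rw [← h1] at h; exact adj_rr h
          · exact Or.inr h1
          · simp at h1
        | cons h'' q'' => simp at hp

lemma twins_ncard [Fintype V] :
    (Set.range (vr : V → Option (V ⊕ V))).ncard = Fintype.card V := by
  rw [← Set.image_univ, Set.ncard_image_of_injective _ (fun a b h => vr_inj.mp h),
    Set.ncard_univ, Nat.card_eq_fintype_card]

end Myc

/-- If `G` has order `n ≥ 4`, girth at least `6` (acyclic graphs have
infinite girth, so qualify) and a perfect matching, then `gp(μ(G)) = n`. -/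
theorem gpNumber_mycielskian_perfect_matching [Fintype V] (G : SimpleGraph V)
    (hn : 4 ≤ Fintype.card V) (hg : 6 ≤ G.egirth)
    (hM : ∃ M : Set (Sym2 V), M ⊆ G.edgeSet ∧
      (∀ e ∈ M, ∀ f ∈ M, e ≠ f → ∀ v : V, v ∈ e → v ∉ f) ∧
      (∀ v : V, ∃ e ∈ M, v ∈ e)) :
    gpNumber (Mycielskian G) = Fintype.card V := by

  obtain ⟨M, hMe, hMdisj, hMcov⟩ := hM
  obtain ⟨m, hma, hmi⟩ := Myc.exists_matching_fun hMe hMdisj hMcov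
  have hub : ∀ k ∈ {k | ∃ S : Set (Option (V ⊕ V)), IsGPSet (Mycielskian G) S ∧ S.ncard = k},
      k ≤ Fintype.card V := by
    rintro k ⟨S, hS, rfl⟩
    exact Myc.main_upper hn hg hma hmi S hS
  have hmem : Fintype.card V ∈
      {k | ∃ S : Set (Option (V ⊕ V)), IsGPSet (Mycielskian G) S ∧ S.ncard = k} :=
    ⟨Set.range Myc.vr, Myc.twins_gp (G := G), Myc.twins_ncard⟩
  refine le_antisymm (csSup_le ⟨_, hmem⟩ hub) (le_csSup ⟨Fintype.card V, ?_⟩ hmem)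
  intro k hk
  exact hub k hk
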